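/- The extended pentagon configuration can be realized in the plane with all coordinates in the field ℚ(√5). -/

import Mathlib

/-- The ten lines of the extended pentagon configuration 𝒞₁₁: points 0–4 are
the pentagon vertices, 5–9 the diagonal intersection points, 10 the center. -/
def pentagonLines : List (List (Fin 11)) :=
  [[0, 2, 5, 6], [0, 3, 8, 9], [0, 7, 10], [1, 3, 5, 7], [1, 4, 6, 9],
   [1, 8, 10], [2, 4, 7, 8], [2, 9, 10], [3, 6, 10], [4, 5, 10]]

/-- Five is not an integer square. -/
lemma five_not_square : ∀ n : ℤ, (5:ℤ) ≠ n * n := by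
  intro n h
  have h1 : n ≤ 2 := by nlinarith
  have h2 : -2 ≤ n := by nlinarith
  interval_cases n <;> norm_num at h

/-- The embedding of ℤ[√5] into ℝ. -/
noncomputable def rh : ℤ√5 →+* ℝ := Zsqrtd.toReal (by norm_num)

lemma rh_inj : Function.Injective rh :=
  Zsqrtd.toReal_injective (by norm_num) five_not_square

/-- Coordinates (in ℤ[√5]) of the 11 points of the configuration. -/
def P : Fin 11 → (ℤ√5) × (ℤ√5) :=
  ![(⟨4,0⟩, ⟨0,0⟩), (⟨-1,1⟩, ⟨4,0⟩), (⟨-1,-1⟩, ⟨-2,2⟩), (⟨-1,-1⟩, ⟨2,-2⟩),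
    (⟨-1,1⟩, ⟨-4,0⟩), (⟨4,-2⟩, ⟨6,-2⟩), (⟨-1,1⟩, ⟨-8,4⟩), (⟨-6,2⟩, ⟨0,0⟩),
    (⟨4,-2⟩, ⟨-6,2⟩), (⟨-1,1⟩, ⟨8,-4⟩), (⟨0,0⟩, ⟨0,0⟩)]

/-- The determinant test for collinearity, in ℤ[√5]. -/
def D (i j k : Fin 11) : ℤ√5 :=
  ((P j).1 - (P i).1) * ((P k).2 - (P i).2) -
    ((P k).1 - (P i).1) * ((P j).2 - (P i).2)

lemma collinear_iff_det {A B C : ℝ × ℝ} :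
    Collinear ℝ ({A, B, C} : Set (ℝ × ℝ)) ↔
      (B.1 - A.1) * (C.2 - A.2) - (C.1 - A.1) * (B.2 - A.2) = 0 := by
  rw [collinear_iff_of_mem (Set.mem_insert A {B, C})]
  constructor
  · rintro ⟨v, hv⟩
    obtain ⟨tb, hb⟩ := hv B (by simp)
    obtain ⟨tc, hc⟩ := hv C (by simp)
    rw [hb, hc]
    simp only [vadd_eq_add, Prod.fst_add, Prod.snd_add, Prod.smul_fst, Prod.smul_snd,
      smul_eq_mul]
    ring
  · intro h
    by_cases hBA : B = A
    · refine ⟨C - A, ?_⟩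
      intro p hp
      simp only [Set.mem_insert_iff, Set.mem_singleton_iff] at hp
      rcases hp with rfl | rfl | rfl
      · exact ⟨0, by simp⟩
      · exact ⟨0, by simp [hBA]⟩
      · exact ⟨1, by simp⟩
    · refine ⟨B - A, ?_⟩
      intro p hp
      simp only [Set.mem_insert_iff, Set.mem_singleton_iff] at hp
      rcases hp with rfl | rfl | rfl
      · exact ⟨0, by simp⟩
      · exact ⟨1, by simp⟩
      · have hne : B.1 ≠ A.1 ∨ B.2 ≠ A.2 := by
          by_contra hc
          push_neg at hc
          exact hBA (Prod.ext_iff.mpr ⟨hc.1, hc.2⟩)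
        rcases hne with h1 | h2
        · have hb : B.1 - A.1 ≠ 0 := sub_ne_zero.mpr h1
          refine ⟨(p.1 - A.1) / (B.1 - A.1), ?_⟩
          rw [Prod.ext_iff]
          simp only [vadd_eq_add, Prod.fst_add, Prod.snd_add, Prod.smul_fst, Prod.smul_snd,
            smul_eq_mul, Prod.fst_sub, Prod.snd_sub]
          constructor
          · field_simp
            ring
          · field_simp
            linear_combination h
        · have hb : B.2 - A.2 ≠ 0 := sub_ne_zero.mpr h2
          refine ⟨(p.2 - A.2) / (B.2 - A.2), ?_⟩
          rw [Prod.ext_iff]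
          simp only [vadd_eq_add, Prod.fst_add, Prod.snd_add, Prod.smul_fst, Prod.smul_snd,
            smul_eq_mul, Prod.fst_sub, Prod.snd_sub]
          constructor
          · field_simp
            linear_combination -h
          · field_simp
            ring

lemma key : ∀ i j k : Fin 11, i ≠ j → j ≠ k → i ≠ k →
    (D i j k = 0 ↔ ∃ L ∈ pentagonLines, i ∈ L ∧ j ∈ L ∧ k ∈ L) := by
  decide

lemma Pinj : Function.Injective P := by
  intro i j h
  revert h
  revert i j
  decide

/-- The extended pentagon configuration can be realized in the plane with all
coordinates in ℚ(√5) = {p + q√5 : p, q ∈ ℚ}. -/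
theorem pentagon_configuration_realizable_over_Q_sqrt5 :
    ∃ w : Fin 11 → ℝ × ℝ, Function.Injective w ∧
      (∀ i, (∃ p q : ℚ, (w i).1 = p + q * Real.sqrt 5) ∧
            (∃ p q : ℚ, (w i).2 = p + q * Real.sqrt 5)) ∧
      ∀ i j k : Fin 11, i ≠ j → j ≠ k → i ≠ k →
        (Collinear ℝ ({w i, w j, w k} : Set (ℝ × ℝ)) ↔
          ∃ L ∈ pentagonLines, i ∈ L ∧ j ∈ L ∧ k ∈ L) := by
  refine ⟨fun i => (rh (P i).1, rh (P i).2), ?_, ?_, ?_⟩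
  · intro i j h
    rw [Prod.ext_iff] at h
    exact Pinj (Prod.ext_iff.mpr ⟨rh_inj h.1, rh_inj h.2⟩)
  · intro i
    constructor
    · exact ⟨((P i).1.re : ℚ), ((P i).1.im : ℚ), by
        simp [rh, Zsqrtd.toReal_apply]⟩
    · exact ⟨((P i).2.re : ℚ), ((P i).2.im : ℚ), by
        simp [rh, Zsqrtd.toReal_apply]⟩
  · intro i j k hij hjk hik
    rw [collinear_iff_det]
    have hdet : (rh (P j).1 - rh (P i).1) * (rh (P k).2 - rh (P i).2) -
        (rh (P k).1 - rh (P i).1) * (rh (P j).2 - rh (P i).2) = rh (D i j k) := by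
      simp [D, map_sub, map_mul]
    simp only []
    rw [hdet, map_eq_zero_iff rh rh_inj]
    exact key i j k hij hjk hik
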